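/- For any two integer-supported probability distribution functions F and G, there exists a universal constant C > 0 such that sup_{k∈ℤ} |ΔF(k) − ΔG(k)| ≤ C · (sup_{k∈ℤ} |F(k) − G(k)|)^{1/2} · (‖Δ³F‖₁ + ‖Δ³G‖₁)^{1/2}, where Δf(k) = f(k+1) − f(k) and ‖f‖₁ = Σ_{k∈ℤ} |f(k)|. -/

import Mathlib

open MeasureTheory Filter

noncomputable section

/-- Forward difference operator with step `m`. -/
def fd (m : ℤ) (f : ℤ → ℝ) : ℤ → ℝ := fun j => f (j + m) - f j

namespace DlocAux

lemma Ico_insert (a b : ℤ) (h : a ≤ b) :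
    Finset.Ico a (b + 1) = insert b (Finset.Ico a b) := by
  ext x; simp [Finset.mem_Ico]; omega

lemma tele (g : ℤ → ℝ) (a b : ℤ) (hab : a ≤ b) :
    ∑ j ∈ Finset.Ico a b, fd 1 g j = g b - g a := by
  refine Int.le_induction (motive := fun b _ => ∑ j ∈ Finset.Ico a b, fd 1 g j = g b - g a)
    (m := a) (by simp) ?_ b hab
  intro n hn ih
  rw [Ico_insert a n hn, Finset.sum_insert (by simp), ih]
  simp only [fd]; ring

section CDF
variable {F : ℤ → ℝ} (hm : Monotone F) (h0 : Tendsto F atBot (nhds 0))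
  (h1 : Tendsto F atTop (nhds 1))
include hm h0 h1

omit h1 in
lemma F_nonneg (k : ℤ) : 0 ≤ F k :=
  le_of_tendsto h0 (eventually_atBot.2 ⟨k, fun _ hm' => hm hm'⟩)

omit h0 in
lemma F_le_one (k : ℤ) : F k ≤ 1 :=
  ge_of_tendsto h1 (eventually_atTop.2 ⟨k, fun _ hm' => hm hm'⟩)

omit h0 h1 in
lemma p_nonneg (k : ℤ) : 0 ≤ fd 1 F k := sub_nonneg.2 (hm (by omega))

lemma p_summable : Summable (fd 1 F) := by
  apply summable_of_sum_le (c := 1) (fun k => p_nonneg hm k)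
  intro u
  rcases u.eq_empty_or_nonempty with rfl | hu
  · simp
  · obtain ⟨a, b, hab⟩ : ∃ a b : ℤ, a ≤ b + 1 ∧ u ⊆ Finset.Ico a (b + 1) := by
      refine ⟨u.min' hu, u.max' hu, ?_, fun x hx => ?_⟩
      · have := u.min'_le _ (u.max'_mem hu); omega
      · simp only [Finset.mem_Ico]
        exact ⟨u.min'_le x hx, by have := u.le_max' x hx; omega⟩
    calc ∑ k ∈ u, fd 1 F k ≤ ∑ k ∈ Finset.Ico a (b+1), fd 1 F k :=
          Finset.sum_le_sum_of_subset_of_nonneg hab.2 (fun i _ _ => p_nonneg hm i)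
      _ = F (b+1) - F a := tele F a (b+1) hab.1
      _ ≤ 1 := by
          have := F_le_one hm h1 (b+1); have := F_nonneg hm h0 a; linarith

lemma p_tendsto_zero : Tendsto (fd 1 F) atTop (nhds 0) :=
  ((p_summable hm h0 h1).tendsto_cofinite_zero).mono_left
    (Int.cofinite_eq ▸ le_sup_right)

lemma d3_summable : Summable (fun k => |fd 1 (fd 1 (fd 1 F)) k|) := by
  have hp := p_summable hm h0 h1
  have h2 : Summable (fun k : ℤ => fd 1 F (k+1)) :=
    hp.comp_injective (add_left_injective (1:ℤ))
  have h3 : Summable (fun k : ℤ => fd 1 F (k+2)) :=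
    hp.comp_injective (add_left_injective (2:ℤ))
  have hg : Summable (fun k : ℤ => fd 1 F k + 2 * fd 1 F (k+1) + fd 1 F (k+2)) :=
    (hp.add (h2.mul_left 2)).add h3
  refine Summable.of_nonneg_of_le (fun k => abs_nonneg _) (fun k => ?_) hg
  have n0 := p_nonneg hm (F := F) k
  have n1 := p_nonneg hm (F := F) (k+1)
  have n2 := p_nonneg hm (F := F) (k+2)
  simp only [fd] at n0 n1 n2 ⊢
  rw [abs_le]
  constructor <;> · ring_nf at n0 n1 n2 ⊢; linarith

lemma d2_bound (k : ℤ) :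
    |fd 1 (fd 1 F) k| ≤ ∑' j : ℤ, |fd 1 (fd 1 (fd 1 F)) j| := by
  have hs := d3_summable hm h0 h1
  have key : ∀ M : ℤ, k ≤ M →
      |fd 1 (fd 1 F) k| ≤ |fd 1 (fd 1 F) M| + ∑' j : ℤ, |fd 1 (fd 1 (fd 1 F)) j| := by
    intro M hM
    have ht := tele (fd 1 (fd 1 F)) k M hM
    have h1' : fd 1 (fd 1 F) k = fd 1 (fd 1 F) M - ∑ j ∈ Finset.Ico k M, fd 1 (fd 1 (fd 1 F)) j := by
      rw [ht]; ring
    rw [h1']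
    calc |fd 1 (fd 1 F) M - ∑ j ∈ Finset.Ico k M, fd 1 (fd 1 (fd 1 F)) j|
        ≤ |fd 1 (fd 1 F) M| + |∑ j ∈ Finset.Ico k M, fd 1 (fd 1 (fd 1 F)) j| := abs_sub _ _
      _ ≤ |fd 1 (fd 1 F) M| + ∑ j ∈ Finset.Ico k M, |fd 1 (fd 1 (fd 1 F)) j| := by
          gcongr; exact Finset.abs_sum_le_sum_abs _ _
      _ ≤ |fd 1 (fd 1 F) M| + ∑' j : ℤ, |fd 1 (fd 1 (fd 1 F)) j| := by
          gcongr; exact Summable.sum_le_tsum _ (fun i _ => abs_nonneg _) hs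
  have hten : Tendsto (fun M : ℤ => |fd 1 (fd 1 F) M| + ∑' j : ℤ, |fd 1 (fd 1 (fd 1 F)) j|)
      atTop (nhds (0 + ∑' j : ℤ, |fd 1 (fd 1 (fd 1 F)) j|)) := by
    refine Tendsto.add ?_ tendsto_const_nhds
    have hp0 := p_tendsto_zero hm h0 h1
    have : Tendsto (fd 1 (fd 1 F)) atTop (nhds 0) := by
      have h2 : Tendsto (fun M : ℤ => fd 1 F (M + 1)) atTop (nhds 0) :=
        hp0.comp (tendsto_atTop_add_const_right _ 1 tendsto_id)
      have := h2.sub hp0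
      rw [sub_zero] at this; exact this
    simpa using this.abs
  rw [zero_add] at hten
  exact ge_of_tendsto hten (eventually_atTop.2 ⟨k, fun M hM => key M hM⟩)

end CDF

lemma fd_zero_const (g : ℤ → ℝ) (hg : ∀ k, fd 1 g k = 0) (k : ℤ) : g k = g 0 := by
  induction k using Int.induction_on with
  | zero => rfl
  | succ n ih =>
      have h := hg n
      simp only [fd] at h
      have : g ((n:ℤ) + 1) = g n := by linarith
      rw [this, ih]
  | pred n ih =>
      have h := hg (-(n:ℤ) - 1)
      simp only [fd] at h
      have he : (-(n:ℤ) - 1) + 1 = -(n:ℤ) := by ring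
      rw [he] at h
      have : g (-(n:ℤ) - 1) = g (-(n:ℤ)) := by linarith
      rw [this, ih]

lemma fd_tele (h : ℤ → ℝ) (k : ℤ) : ∀ n : ℕ,
    fd 1 h (k + n) = fd 1 h k + ∑ j ∈ Finset.range n, fd 1 (fd 1 h) (k + j) := by
  intro n
  induction n with
  | zero => simp
  | succ m ihm =>
      rw [Finset.sum_range_succ, ← add_assoc, ← ihm]
      have he : (k + ((m:ℤ) + 1)) = (k + m) + 1 := by ring
      have he2 : (k + ((m:ℕ):ℤ) : ℤ) = k + m := rfl
      push_cast
      rw [he]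
      simp only [fd]; ring

lemma key_id (h : ℤ → ℝ) (k : ℤ) (n : ℕ) :
    h (k + n) - h k = (n:ℝ) * fd 1 h k +
      ∑ i ∈ Finset.range n, ∑ j ∈ Finset.range i, fd 1 (fd 1 h) (k + j) := by
  induction n with
  | zero => simp
  | succ m ih =>
      have hc : (k + ((m:ℕ)+1:ℕ) : ℤ) = (k + m) + 1 := by push_cast; ring
      rw [hc, Finset.sum_range_succ]
      have hstep := fd_tele h k m
      have : h (k + m + 1) - h k = (h (k + m) - h k) + fd 1 h (k + m) := by
        simp only [fd]; ring
      rw [this, ih, hstep]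
      push_cast
      ring

lemma nfd_bound (h : ℤ → ℝ) (d B : ℝ) (hd : ∀ m, |h m| ≤ d)
    (hB : ∀ m, |fd 1 (fd 1 h) m| ≤ B) (hB0 : 0 ≤ B) (k : ℤ) (n : ℕ) :
    (n:ℝ) * |fd 1 h k| ≤ 2 * d + (n:ℝ)^2 * B := by
  have hid := key_id h k n
  have hrw : (n:ℝ) * fd 1 h k = (h (k + n) - h k) -
      ∑ i ∈ Finset.range n, ∑ j ∈ Finset.range i, fd 1 (fd 1 h) (k + j) := by
    linarith [hid]
  have hds : |∑ i ∈ Finset.range n, ∑ j ∈ Finset.range i, fd 1 (fd 1 h) (k + j)|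
      ≤ (n:ℝ) * ((n:ℝ) * B) := by
    calc |∑ i ∈ Finset.range n, ∑ j ∈ Finset.range i, fd 1 (fd 1 h) (k + j)|
        ≤ ∑ i ∈ Finset.range n, |∑ j ∈ Finset.range i, fd 1 (fd 1 h) (k + j)| :=
          Finset.abs_sum_le_sum_abs _ _
      _ ≤ ∑ _i ∈ Finset.range n, ((n:ℝ) * B) := by
          refine Finset.sum_le_sum (fun i hi => ?_)
          calc |∑ j ∈ Finset.range i, fd 1 (fd 1 h) (k + j)|
              ≤ ∑ j ∈ Finset.range i, |fd 1 (fd 1 h) (k + j)| :=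
                Finset.abs_sum_le_sum_abs _ _
            _ ≤ ∑ _j ∈ Finset.range i, B := Finset.sum_le_sum (fun j _ => hB _)
            _ = (i:ℝ) * B := by simp [mul_comm]
            _ ≤ (n:ℝ) * B := by
                have : (i:ℝ) ≤ (n:ℝ) := by
                  exact_mod_cast (Finset.mem_range.1 hi).le
                exact mul_le_mul_of_nonneg_right this hB0
      _ = (n:ℝ) * ((n:ℝ) * B) := by simp [mul_comm]
  calc (n:ℝ) * |fd 1 h k| = |(n:ℝ) * fd 1 h k| := by
        rw [abs_mul, abs_of_nonneg (by positivity : (0:ℝ) ≤ (n:ℝ))]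
    _ ≤ |h (k + n) - h k| +
        |∑ i ∈ Finset.range n, ∑ j ∈ Finset.range i, fd 1 (fd 1 h) (k + j)| := by
        rw [hrw]; exact abs_sub _ _
    _ ≤ (|h (k + n)| + |h k|) + (n:ℝ) * ((n:ℝ) * B) := by
        gcongr
        exact abs_sub _ _
    _ ≤ 2 * d + (n:ℝ)^2 * B := by
        have := hd (k + n); have := hd k; nlinarith

end DlocAux

open DlocAux

/-- `d_loc ≤ C · d_K^{1/2} · (‖Δ³F‖₁ + ‖Δ³G‖₁)^{1/2}` for integer-supported CDFs. -/
theorem dloc_le_sqrt_dK_mul_smoothness :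
    ∃ C : ℝ, 0 < C ∧ ∀ F G : ℤ → ℝ,
      Monotone F → Tendsto F atBot (nhds 0) → Tendsto F atTop (nhds 1) →
      Monotone G → Tendsto G atBot (nhds 0) → Tendsto G atTop (nhds 1) →
      (⨆ k : ℤ, |fd 1 F k - fd 1 G k|) ≤
        C * Real.sqrt (⨆ k : ℤ, |F k - G k|) *
          Real.sqrt ((∑' k : ℤ, |(fd 1)^[3] F k|) + ∑' k : ℤ, |(fd 1)^[3] G k|) := by
  refine ⟨4, by norm_num, fun F G hmF h0F h1F hmG h0G h1G => ?_⟩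
  have hitF : (fd 1)^[3] F = fd 1 (fd 1 (fd 1 F)) := rfl
  have hitG : (fd 1)^[3] G = fd 1 (fd 1 (fd 1 G)) := rfl
  rw [hitF, hitG]
  set h : ℤ → ℝ := fun k => F k - G k with hh
  set d : ℝ := ⨆ k : ℤ, |F k - G k| with hdd
  set SF : ℝ := ∑' k : ℤ, |fd 1 (fd 1 (fd 1 F)) k| with hSF
  set SG : ℝ := ∑' k : ℤ, |fd 1 (fd 1 (fd 1 G)) k| with hSG
  set A : ℝ := SF + SG with hA
  -- basic facts
  have hbdd : BddAbove (Set.range fun k : ℤ => |F k - G k|) := by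
    refine ⟨2, ?_⟩
    rintro x ⟨k, rfl⟩
    have := F_nonneg hmF h0F k; have := F_le_one hmF h1F k
    have := F_nonneg hmG h0G k; have := F_le_one hmG h1G k
    rw [abs_le]; constructor <;> linarith
  have hd : ∀ k, |h k| ≤ d := fun k => le_ciSup hbdd k
  have hd0 : 0 ≤ d := (abs_nonneg _).trans (hd 0)
  have hSF0 : 0 ≤ SF := tsum_nonneg (fun k => abs_nonneg _)
  have hSG0 : 0 ≤ SG := tsum_nonneg (fun k => abs_nonneg _)
  have hA0 : 0 ≤ A := by positivity
  have hB : ∀ m, |fd 1 (fd 1 h) m| ≤ A := by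
    intro m
    have he : fd 1 (fd 1 h) m = fd 1 (fd 1 F) m - fd 1 (fd 1 G) m := by
      simp only [fd, hh]; ring
    rw [he]
    calc |fd 1 (fd 1 F) m - fd 1 (fd 1 G) m| ≤ |fd 1 (fd 1 F) m| + |fd 1 (fd 1 G) m| :=
          abs_sub _ _
      _ ≤ SF + SG := add_le_add (d2_bound hmF h0F h1F m) (d2_bound hmG h0G h1G m)
  -- main pointwise bound
  have main : ∀ k : ℤ, |fd 1 F k - fd 1 G k| ≤ 4 * Real.sqrt d * Real.sqrt A := by
    intro k
    have hfd : fd 1 F k - fd 1 G k = fd 1 h k := by simp only [fd, hh]; ring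
    rw [hfd]
    rcases eq_or_lt_of_le hA0 with hAz | hAp
    · -- A = 0 : impossible, derive False
      exfalso
      have hSFz : SF = 0 := le_antisymm (by linarith) hSF0
      have h3z : ∀ m, fd 1 (fd 1 (fd 1 F)) m = 0 := by
        intro m
        have hsum := d3_summable hmF h0F h1F
        refine abs_eq_zero.1 (le_antisymm ?_ (abs_nonneg _))
        have hle := Summable.le_tsum hsum m (fun j _ => abs_nonneg _)
        rw [← hSF] at hle
        linarith
      have h2c : ∀ m, fd 1 (fd 1 F) m = fd 1 (fd 1 F) 0 :=
        fd_zero_const _ h3z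
      -- also Δ²F k → 0, so Δ²F ≡ 0
      have h2z : ∀ m, fd 1 (fd 1 F) m = 0 := by
        intro m
        have hb := d2_bound hmF h0F h1F m
        rw [← hSF, hSFz] at hb
        exact abs_eq_zero.1 (le_antisymm hb (abs_nonneg _))
      have hpc : ∀ m, fd 1 F m = fd 1 F 0 := fd_zero_const _ h2z
      have hp0 : fd 1 F 0 = 0 := by
        have ht := p_tendsto_zero hmF h0F h1F
        have hc : Tendsto (fd 1 F) atTop (nhds (fd 1 F 0)) := by
          have : (fd 1 F) = fun _ => fd 1 F 0 := funext hpc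
          rw [this]; exact tendsto_const_nhds
        exact (tendsto_nhds_unique hc ht)
      have hFc : ∀ m, F m = F 0 := by
        refine fd_zero_const _ (fun m => ?_)
        rw [hpc m, hp0]
      have hc0 : Tendsto F atBot (nhds (F 0)) := by
        have : F = fun _ => F 0 := funext hFc
        rw [this]; exact tendsto_const_nhds
      have hc1 : Tendsto F atTop (nhds (F 0)) := by
        have : F = fun _ => F 0 := funext hFc
        rw [this]; exact tendsto_const_nhds
      have e0 : F 0 = 0 := tendsto_nhds_unique hc0 h0F
      have e1 : F 0 = 1 := tendsto_nhds_unique hc1 h1F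
      rw [e0] at e1; norm_num at e1
    · -- A > 0
      have key := nfd_bound h d A hd hB hA0 k
      rcases le_or_gt d A with hdA | hAd
      · -- d ≤ A : use trivial bound |Δh k| ≤ 2d
        have htriv : |fd 1 h k| ≤ 2 * d := by
          have h1k := hd (k + 1); have h0k := hd k
          simp only [fd]
          calc |h (k+1) - h k| ≤ |h (k+1)| + |h k| := abs_sub _ _
            _ ≤ 2 * d := by linarith
        have hsq : Real.sqrt d ≤ Real.sqrt A := Real.sqrt_le_sqrt hdA
        calc |fd 1 h k| ≤ 2 * d := htriv
          _ = 2 * (Real.sqrt d * Real.sqrt d) := by rw [Real.mul_self_sqrt hd0]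
          _ ≤ 2 * (Real.sqrt d * Real.sqrt A) := by
              gcongr
          _ ≤ 4 * Real.sqrt d * Real.sqrt A := by
              have := Real.sqrt_nonneg d; have := Real.sqrt_nonneg A; nlinarith
      · -- A < d
        set sd := Real.sqrt d with hsd
        set sa := Real.sqrt A with hsa
        have hsa0 : 0 < sa := Real.sqrt_pos.2 hAp
        have hsd0 : 0 < sd := Real.sqrt_pos.2 (hAp.trans hAd)
        have hdsq : d = sd^2 := (Real.sq_sqrt hd0).symm
        have hAsq : A = sa^2 := (Real.sq_sqrt hA0).symm
        have hsad : sa ≤ sd := Real.sqrt_le_sqrt hAd.le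
        set n : ℕ := ⌈sd / sa⌉₊ with hn
        have hr1 : (1:ℝ) ≤ sd / sa := (one_le_div hsa0).2 hsad
        have hnlo : sd / sa ≤ (n:ℝ) := Nat.le_ceil _
        have hnhi : (n:ℝ) ≤ 2 * (sd / sa) := by
          have := Nat.ceil_lt_add_one (by positivity : (0:ℝ) ≤ sd / sa)
          have : (n:ℝ) < sd / sa + 1 := by exact_mod_cast this
          linarith
        have hn0 : 0 < (n:ℝ) := lt_of_lt_of_le (by linarith) hnlo
        have hkey := key n
        -- n * |fd| ≤ 2 d + n² A ≤ n * (4 sd sa)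
        have hlow : sd ≤ (n:ℝ) * sa := by
          rw [div_le_iff₀ hsa0] at hnlo; linarith
        have hhigh : (n:ℝ) * sa ≤ 2 * sd := by
          calc (n:ℝ) * sa ≤ 2 * (sd / sa) * sa := by
                exact mul_le_mul_of_nonneg_right hnhi hsa0.le
            _ = 2 * sd := by field_simp
        have hfinal : 2 * d + (n:ℝ)^2 * A ≤ (n:ℝ) * (4 * sd * sa) := by
          rw [hdsq, hAsq]
          nlinarith [hlow, hhigh, hsa0, hsd0, hn0]
        have := hkey.trans hfinal
        exact le_of_mul_le_mul_left this hn0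
  refine ciSup_le (fun k => ?_)
  exact main k
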